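/- Let φ be the baker map and C_j = [a_j, b_j) × [c_j, d_j) ⊆ [0,1)² with a_j = c_j = 0. For the initial probability measure P with uniform density 1/μ_L[C_j] on C_j, the occupation probability satisfies p_j(n) := P[φ^{-n}(C_j)] ≤ 1/2ⁿ for all n with 2ⁿ d_j < 1; more precisely, p_j(n) = (1/2ⁿ)·ϑ(b_j − 2ⁿ a_j)·ϑ(d_j − 2ⁿ c_j)/((b_j − a_j)(d_j − c_j)) where ϑ(x) = max(x, 0), for n < log₂(1/d_j). -/

import Mathlib

open MeasureTheory Set

/-- The baker map on [0,1)². -/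
noncomputable def baker (p : ℝ × ℝ) : ℝ × ℝ :=
  if p.1 < 1 / 2 then (2 * p.1, p.2 / 2) else (2 * p.1 - 1, p.2 / 2 + 1 / 2)

/-- If the first coordinate stays small, the iterated baker map just scales. -/
lemma baker_iter_small (n : ℕ) : ∀ x y : ℝ, 0 ≤ x → 2 ^ n * x < 1 →
    baker^[n] (x, y) = (2 ^ n * x, y / 2 ^ n) := by
  induction n with
  | zero => intro x y _ _; simp
  | succ n ih =>
    intro x y hx h
    have h2 : (0:ℝ) < 2 ^ n := by positivity
    have hxhalf : x < 1 / 2 := by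
      nlinarith [pow_le_pow_right₀ (by norm_num : (1:ℝ) ≤ 2) (Nat.le_add_left 1 n)]
    rw [Function.iterate_succ_apply]
    have : baker (x, y) = (2 * x, y / 2) := by rw [baker]; rw [if_pos hxhalf]
    rw [this, ih (2 * x) (y / 2) (by linarith) (by nlinarith [pow_succ (2:ℝ) n])]
    simp [Prod.ext_iff, pow_succ]; constructor <;> ring

/-- The second coordinate of the iterated baker map is at least y / 2^n. -/
lemma baker_iter_snd_ge (n : ℕ) : ∀ x y : ℝ, 0 ≤ y →
    y / 2 ^ n ≤ (baker^[n] (x, y)).2 := by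
  induction n with
  | zero => intro x y hy; simp
  | succ n ih =>
    intro x y hy
    have h2 : (0:ℝ) < 2 ^ n := by positivity
    rw [Function.iterate_succ_apply]
    by_cases hx : x < 1 / 2
    · have : baker (x, y) = (2 * x, y / 2) := by rw [baker]; rw [if_pos hx]
      rw [this]
      have := ih (2 * x) (y / 2) (by linarith)
      calc y / 2 ^ (n + 1) = (y / 2) / 2 ^ n := by rw [pow_succ]; ring
        _ ≤ _ := this
    · have : baker (x, y) = (2 * x - 1, y / 2 + 1 / 2) := by rw [baker]; rw [if_neg hx]
      rw [this]
      have := ih (2 * x - 1) (y / 2 + 1 / 2) (by linarith)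
      calc y / 2 ^ (n + 1) = (y / 2) / 2 ^ n := by rw [pow_succ]; ring
        _ ≤ (y / 2 + 1 / 2) / 2 ^ n := by gcongr; linarith
        _ ≤ _ := this

/-- If the final second coordinate is below 1/2^n, the dynamics was always the left branch. -/
lemma baker_iter_of_snd_small (n : ℕ) : ∀ x y : ℝ, 0 ≤ x → 0 ≤ y →
    (baker^[n] (x, y)).2 < 1 / 2 ^ n →
    baker^[n] (x, y) = (2 ^ n * x, y / 2 ^ n) := by
  induction n with
  | zero => intro x y _ _ _; simp
  | succ n ih =>
    intro x y hx hy hsnd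
    have h2 : (0:ℝ) < 2 ^ n := by positivity
    by_cases hxhalf : x < 1 / 2
    · have hb : baker (x, y) = (2 * x, y / 2) := by rw [baker]; rw [if_pos hxhalf]
      rw [Function.iterate_succ_apply, hb] at hsnd ⊢
      have hlt : (baker^[n] (2 * x, y / 2)).2 < 1 / 2 ^ n := by
        apply lt_of_lt_of_le hsnd
        apply one_div_le_one_div_of_le h2
        nlinarith [pow_succ (2:ℝ) n]
      rw [ih (2 * x) (y / 2) (by linarith) (by linarith) hlt]
      simp [Prod.ext_iff, pow_succ]; constructor <;> ring
    · exfalso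
      have hb : baker (x, y) = (2 * x - 1, y / 2 + 1 / 2) := by rw [baker]; rw [if_neg hxhalf]
      rw [Function.iterate_succ_apply, hb] at hsnd
      have := baker_iter_snd_ge n (2 * x - 1) (y / 2 + 1 / 2) (by linarith)
      have h1 : (1 / 2 : ℝ) / 2 ^ n ≤ (y / 2 + 1 / 2) / 2 ^ n := by gcongr; linarith
      have : (1 / 2 : ℝ) / 2 ^ n ≤ (baker^[n] (2 * x - 1, y / 2 + 1 / 2)).2 := le_trans h1 this
      have hcmp : (1 : ℝ) / 2 ^ (n + 1) = (1 / 2) / 2 ^ n := by rw [pow_succ]; ring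
      rw [hcmp] at hsnd
      linarith

/-- For the baker map and the cell C_j = [0,b_j)×[0,d_j) (a_j = c_j = 0), with initial
probability uniform on C_j, the occupation probability p_j(n) = P[φ^{-n}(C_j)] satisfies
p_j(n) = (1/2ⁿ)·ϑ(b_j − 2ⁿa_j)·ϑ(d_j − 2ⁿc_j)/((b_j−a_j)(d_j−c_j)) ≤ 1/2ⁿ
for n with 2ⁿ d_j < 1, where ϑ(x) = max(x,0). -/
theorem baker_occupation_decay (n : ℕ) (b d : ℝ)
    (hb0 : 0 < b) (hb1 : b ≤ 1) (hd0 : 0 < d) (hd1 : d ≤ 1)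
    (hn : (2 : ℝ) ^ n * d < 1)
    (C : Set (ℝ × ℝ)) (hC : C = Set.Ico (0 : ℝ) b ×ˢ Set.Ico (0 : ℝ) d) :
    (volume (baker^[n] ⁻¹' C ∩ C)).toReal / (volume C).toReal =
        (1 / 2 ^ n) * (max (b - 2 ^ n * 0) 0 * max (d - 2 ^ n * 0) 0) /
          ((b - 0) * (d - 0)) ∧
    (volume (baker^[n] ⁻¹' C ∩ C)).toReal / (volume C).toReal ≤ 1 / 2 ^ n := by
  have h2 : (0:ℝ) < 2 ^ n := by positivity
  have h2n1 : (1:ℝ) ≤ 2 ^ n := by simpa using pow_le_pow_right₀ (by norm_num : (1:ℝ) ≤ 2) (Nat.zero_le n)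
  have hdlt : d < 1 / 2 ^ n := by rw [lt_div_iff₀ h2]; linarith [hn]
  have hset : baker^[n] ⁻¹' C ∩ C = Set.Ico (0 : ℝ) (b / 2 ^ n) ×ˢ Set.Ico (0 : ℝ) d := by
    ext ⟨x, y⟩
    subst hC
    simp only [Set.mem_inter_iff, Set.mem_preimage, Set.mem_prod, Set.mem_Ico]
    constructor
    · rintro ⟨hpre, ⟨hx0, hxb⟩, hy0, hyd⟩
      have hsnd : (baker^[n] (x, y)).2 < 1 / 2 ^ n := lt_trans hpre.2.2 hdlt
      have heq := baker_iter_of_snd_small n x y hx0 hy0 hsnd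
      rw [heq] at hpre
      refine ⟨⟨hx0, ?_⟩, hy0, hyd⟩
      rw [lt_div_iff₀ h2]
      nlinarith [hpre.1.2]
    · rintro ⟨⟨hx0, hxb⟩, hy0, hyd⟩
      have hxlt : 2 ^ n * x < b := by rw [lt_div_iff₀ h2] at hxb; linarith
      have heq := baker_iter_small n x y hx0 (by linarith)
      rw [heq]
      refine ⟨⟨⟨by positivity, hxlt⟩, by positivity, ?_⟩, ⟨hx0, ?_⟩, hy0, hyd⟩
      · calc y / 2 ^ n ≤ y / 1 := by gcongr
          _ = y := div_one y
          _ < d := hyd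
      · calc x < b / 2 ^ n := hxb
          _ ≤ b / 1 := by gcongr
          _ = b := div_one b
  have hvolC : volume C = ENNReal.ofReal b * ENNReal.ofReal d := by
    rw [hC, Measure.volume_eq_prod, Measure.prod_prod, Real.volume_Ico, Real.volume_Ico,
      sub_zero, sub_zero]
  have hvolI : volume (baker^[n] ⁻¹' C ∩ C) =
      ENNReal.ofReal (b / 2 ^ n) * ENNReal.ofReal d := by
    rw [hset, Measure.volume_eq_prod, Measure.prod_prod, Real.volume_Ico, Real.volume_Ico,
      sub_zero, sub_zero]
  have key : (volume (baker^[n] ⁻¹' C ∩ C)).toReal / (volume C).toReal = 1 / 2 ^ n := by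
    rw [hvolC, hvolI, ENNReal.toReal_mul, ENNReal.toReal_mul,
      ENNReal.toReal_ofReal (by positivity : (0:ℝ) ≤ b / 2 ^ n),
      ENNReal.toReal_ofReal hb0.le, ENNReal.toReal_ofReal hd0.le]
    field_simp
  rw [key]
  constructor
  · rw [max_eq_left (by linarith : (0:ℝ) ≤ b - 2 ^ n * 0),
      max_eq_left (by linarith : (0:ℝ) ≤ d - 2 ^ n * 0)]
    field_simp
    simp only [mul_zero, sub_zero]
    rw [div_self (mul_pos hb0 hd0).ne']
  · exact le_refl _
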